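/- Variational characterization consequence: let H be a real Hilbert space, K ⊆ H nonempty closed convex, P_K the metric projection. Suppose {xₙ} ⊆ H is Fejér monotone with respect to K (‖xₙ₊₁ − k‖ ≤ ‖xₙ − k‖ for all k ∈ K), xₙ converges weakly to q ∈ K, and P_K xₙ → p strongly. Then q = p. -/

import Mathlib

open Filter RealInnerProductSpace

theorem fejer_weak_limit_eq_projection_limit
    {H : Type*} [NormedAddCommGroup H] [InnerProductSpace ℝ H] [CompleteSpace H]
    (K : Set H) (hK : K.Nonempty) (hKc : IsClosed K) (hKv : Convex ℝ K)
    (P : H → H) (hP : ∀ u : H, P u ∈ K ∧ ∀ y ∈ K, ‖u - P u‖ ≤ ‖u - y‖)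
    (x : ℕ → H) (hfej : ∀ k ∈ K, ∀ n : ℕ, ‖x (n + 1) - k‖ ≤ ‖x n - k‖)
    (q : H) (hqK : q ∈ K)
    (hweak : ∀ v : H, Tendsto (fun n => ⟪x n, v⟫) atTop (nhds ⟪q, v⟫))
    (p : H) (hp : Tendsto (fun n => P (x n)) atTop (nhds p)) :
    q = p := by
  obtain ⟨k0, hk0⟩ := hK
  -- boundedness of x n
  have hmono : ∀ n, ‖x n - k0‖ ≤ ‖x 0 - k0‖ := by
    intro n
    induction n with
    | zero => exact le_refl _
    | succ n ih => exact (hfej k0 hk0 n).trans ih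
  set C := ‖x 0 - k0‖ + ‖k0‖ with hC
  have hbd : ∀ n, ‖x n‖ ≤ C := by
    intro n
    calc ‖x n‖ = ‖(x n - k0) + k0‖ := by simp
      _ ≤ ‖x n - k0‖ + ‖k0‖ := norm_add_le _ _
      _ ≤ C := add_le_add_left (hmono n) _
  -- variational inequality
  have hVI : ∀ n, ⟪x n - P (x n), q - P (x n)⟫ ≤ 0 := by
    intro n
    have hmem := (hP (x n)).1
    haveI : Nonempty K := ⟨⟨k0, hk0⟩⟩
    have hbb : BddBelow (Set.range fun w : K => ‖x n - w‖) :=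
      ⟨0, by rintro _ ⟨w, rfl⟩; exact norm_nonneg _⟩
    have heq : ‖x n - P (x n)‖ = ⨅ w : K, ‖x n - w‖ := by
      apply le_antisymm
      · exact le_ciInf fun w => (hP (x n)).2 w w.2
      · exact ciInf_le hbb ⟨P (x n), hmem⟩
    exact ((norm_eq_iInf_iff_real_inner_le_zero hKv hmem).1 heq) q hqK
  -- limits
  have h1 : Tendsto (fun n => ⟪x n, q⟫) atTop (nhds ⟪q, q⟫) := hweak q
  have h2 : Tendsto (fun n => ⟪x n, p⟫) atTop (nhds ⟪q, p⟫) := hweak p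
  have hPp : Tendsto (fun n => P (x n) - p) atTop (nhds 0) := by
    simpa using hp.sub (tendsto_const_nhds (x := p))
  have h3 : Tendsto (fun n => ⟪x n, P (x n) - p⟫) atTop (nhds 0) := by
    have hg : Tendsto (fun n => C * ‖P (x n) - p‖) atTop (nhds 0) := by
      simpa using (tendsto_const_nhds (x := C)).mul hPp.norm
    refine squeeze_zero_norm (fun n => ?_) hg
    calc ‖⟪x n, P (x n) - p⟫‖ ≤ ‖x n‖ * ‖P (x n) - p‖ := norm_inner_le_norm _ _
      _ ≤ C * ‖P (x n) - p‖ := mul_le_mul_of_nonneg_right (hbd n) (norm_nonneg _)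
  have h4 : Tendsto (fun n => ⟪P (x n), q⟫) atTop (nhds ⟪p, q⟫) :=
    hp.inner tendsto_const_nhds
  have h5 : Tendsto (fun n => ⟪P (x n), P (x n)⟫) atTop (nhds ⟪p, p⟫) := hp.inner hp
  have hcomb := (h1.sub (h3.add h2)).sub (h4.sub h5)
  have hlim : Tendsto (fun n => ⟪x n - P (x n), q - P (x n)⟫) atTop (nhds ⟪q - p, q - p⟫) := by
    have hfun : (fun n => ⟪x n - P (x n), q - P (x n)⟫)
        = fun n => (⟪x n, q⟫ - (⟪x n, P (x n) - p⟫ + ⟪x n, p⟫)) - (⟪P (x n), q⟫ - ⟪P (x n), P (x n)⟫) := by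
      funext n
      simp [inner_sub_left, inner_sub_right]
      ring
    have hval : ⟪q - p, q - p⟫ = (⟪q, q⟫ - (0 + ⟪q, p⟫)) - (⟪p, q⟫ - ⟪p, p⟫) := by
      simp [inner_sub_left, inner_sub_right, real_inner_comm]
      rw [norm_sub_sq_real]; ring
    rw [hfun, hval]
    exact hcomb
  have hle : ⟪q - p, q - p⟫ ≤ (0 : ℝ) :=
    le_of_tendsto hlim (Eventually.of_forall hVI)
  have : q - p = 0 := by
    have := real_inner_self_nonpos.1 hle
    exact this
  exact sub_eq_zero.1 this
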